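/- Let Ω be a nonempty set and (f_n) a measure free martingale: each f_n has finite range, and for each n and each atom Q of the partition ℚ_n generated by f_1,...,f_n, the value f_n on Q lies between the minimum and maximum values of f_{n+1} on Q. Then there exists a sequence of probability measures P_n on the algebra 𝒜_n generated by f_1,...,f_n such that P_{n+1} restricted to 𝒜_n equals P_n and the conditional expectation E_{P_{n+1}}[f_{n+1} | 𝒜_n] = f_n for all n. -/

import Mathlib

/-- The atom of the partition generated by `f 0, ..., f n` containing `ω`. -/
def atomOf {Ω : Type*} (f : ℕ → Ω → ℝ) (n : ℕ) (ω : Ω) : Set Ω :=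
  {ω' | ∀ j ≤ n, f j ω' = f j ω}

/-- The algebra `𝒜ₙ` generated by `f 0, ..., f n`: the sets that are unions of
atoms of the partition generated by `f 0, ..., f n`. -/
def algLevel {Ω : Type*} (f : ℕ → Ω → ℝ) (n : ℕ) : Set (Set Ω) :=
  {A | ∀ ω ∈ A, atomOf f n ω ⊆ A}

/-- The algebra `𝒜_∞ = ⋃ₙ 𝒜ₙ`. -/
def algInf {Ω : Type*} (f : ℕ → Ω → ℝ) : Set (Set Ω) :=
  ⋃ n, algLevel f n

/-- `P` is a finitely additive probability measure on the algebra `𝒜`. -/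
def IsFAProb {Ω : Type*} (𝒜 : Set (Set Ω)) (P : Set Ω → ℝ) : Prop :=
  (∀ A ∈ 𝒜, 0 ≤ P A) ∧ P ∅ = 0 ∧ P Set.univ = 1 ∧
    ∀ A ∈ 𝒜, ∀ B ∈ 𝒜, Disjoint A B → P (A ∪ B) = P A + P B

/-- `(f, 𝒜ₙ)` is a measure free martingale: on each atom `Q` of `ℚₙ`, the
(constant) value of `f n` lies between the minimum and the maximum of
`f (n+1)` on `Q` (attained since `f (n+1)` has finite range). -/
def IsMeasureFreeMartingale {Ω : Type*} (f : ℕ → Ω → ℝ) : Prop :=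
  ∀ n (ω : Ω), (∃ ω₁ ∈ atomOf f n ω, f (n + 1) ω₁ ≤ f n ω) ∧
    (∃ ω₂ ∈ atomOf f n ω, f n ω ≤ f (n + 1) ω₂)

section Aux

variable {Ω : Type*}

lemma mem_atomOf_self (f : ℕ → Ω → ℝ) (n : ℕ) (ω : Ω) : ω ∈ atomOf f n ω :=
  fun _ _ => rfl

lemma mem_iff_of_algLevel {f : ℕ → Ω → ℝ} {n : ℕ} {A : Set Ω}
    (hA : A ∈ algLevel f n) {x y : Ω} (hy : y ∈ atomOf f n x) :
    y ∈ A ↔ x ∈ A := by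
  constructor
  · intro h
    have hx : x ∈ atomOf f n y := fun j hj => (hy j hj).symm
    exact hA y h hx
  · intro h
    exact hA x h hy

lemma atomOf_mem_algLevel (f : ℕ → Ω → ℝ) (n : ℕ) (ω : Ω) :
    atomOf f n ω ∈ algLevel f n := by
  intro x hx y hy j hj
  rw [hy j hj, hx j hj]

open Classical in
/-- The discrete "measure" associated to a finite list of weighted points. -/
noncomputable def mfmMeas (L : List (Ω × ℝ)) (A : Set Ω) : ℝ :=
  (L.map fun p => if p.1 ∈ A then p.2 else 0).sum

lemma mfmMeas_nil (A : Set Ω) : mfmMeas ([] : List (Ω × ℝ)) A = 0 := rfl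

open Classical in
lemma mfmMeas_cons (p : Ω × ℝ) (L : List (Ω × ℝ)) (A : Set Ω) :
    mfmMeas (p :: L) A = (if p.1 ∈ A then p.2 else 0) + mfmMeas L A := by
  simp [mfmMeas]

lemma mfmMeas_append (L M : List (Ω × ℝ)) (A : Set Ω) :
    mfmMeas (L ++ M) A = mfmMeas L A + mfmMeas M A := by
  simp [mfmMeas]

lemma mfmMeas_flatMap (L : List (Ω × ℝ)) (F : Ω × ℝ → List (Ω × ℝ)) (A : Set Ω) :
    mfmMeas (L.flatMap F) A = (L.map fun p => mfmMeas (F p) A).sum := by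
  induction L with
  | nil => simp [mfmMeas]
  | cons p L ih =>
    simp [List.flatMap_cons, mfmMeas_append, ih]

lemma mfmMeas_nonneg {L : List (Ω × ℝ)} (h : ∀ p ∈ L, 0 ≤ p.2) (A : Set Ω) :
    0 ≤ mfmMeas L A := by
  classical
  induction L with
  | nil => simp [mfmMeas_nil]
  | cons p L ih =>
    rw [mfmMeas_cons]
    have h1 : 0 ≤ p.2 := h p List.mem_cons_self
    have h2 : 0 ≤ mfmMeas L A := ih fun q hq => h q (List.mem_cons_of_mem p hq)
    have h3 : 0 ≤ (if p.1 ∈ A then p.2 else 0) := by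
      split
      · exact h1
      · exact le_refl 0
    linarith

lemma mfmMeas_empty (L : List (Ω × ℝ)) : mfmMeas L (∅ : Set Ω) = 0 := by
  simp [mfmMeas]

lemma mfmMeas_union {L : List (Ω × ℝ)} {A B : Set Ω} (hAB : Disjoint A B) :
    mfmMeas L (A ∪ B) = mfmMeas L A + mfmMeas L B := by
  induction L with
  | nil => simp [mfmMeas_nil]
  | cons p L ih =>
    rw [mfmMeas_cons, mfmMeas_cons, mfmMeas_cons, ih]
    by_cases hA : p.1 ∈ A
    · have hB : p.1 ∉ B := fun hB => Set.disjoint_left.mp hAB hA hB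
      simp only [Set.mem_union, hA, hB, if_true, if_false, true_or, if_pos]
      ring
    · by_cases hB : p.1 ∈ B
      · have : p.1 ∈ A ∪ B := Or.inr hB
        simp only [hA, hB, this, if_true, if_false, if_pos]
        ring
      · have : p.1 ∉ A ∪ B := by
          intro h; rcases h with h | h
          · exact hA h
          · exact hB h
        simp only [hA, hB, this, if_false]
        ring

lemma sum_map_flatMap {α β : Type*} (L : List α) (F : α → List β) (G : β → ℝ) :
    ((L.flatMap F).map G).sum = (L.map fun a => ((F a).map G).sum).sum := by
  induction L with
  | nil => simp
  | cons a L ih => simp [List.flatMap_cons, ih]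

open Classical in
lemma mul_mfmMeas (c : ℝ) (M : List (Ω × ℝ)) (S : Set Ω) :
    c * mfmMeas M S = (M.map fun p => if p.1 ∈ S then c * p.2 else 0).sum := by
  induction M with
  | nil => simp [mfmMeas_nil]
  | cons p M ih =>
    rw [mfmMeas_cons, mul_add, ih, List.map_cons, List.sum_cons]
    congr 1
    by_cases h : p.1 ∈ S <;> simp [h]

open Classical in
lemma sum_val_mfmMeas (M : List (Ω × ℝ)) (V : Finset ℝ) (g : Ω → ℝ)
    (hV : ∀ p ∈ M, g p.1 ∈ V) (S : Set Ω) :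
    ∑ v ∈ V, v * mfmMeas M (S ∩ g ⁻¹' {v}) =
      (M.map fun p => if p.1 ∈ S then g p.1 * p.2 else 0).sum := by
  induction M with
  | nil => simp [mfmMeas_nil]
  | cons p M ih =>
    have hV' : ∀ q ∈ M, g q.1 ∈ V := fun q hq => hV q (List.mem_cons_of_mem p hq)
    simp only [mfmMeas_cons, mul_add, Finset.sum_add_distrib, List.map_cons, List.sum_cons]
    rw [ih hV']
    congr 1
    by_cases hp : p.1 ∈ S
    · have e : ∀ (v : ℝ) (inst : Decidable (p.1 ∈ S ∩ g ⁻¹' {v})),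
          v * (@ite ℝ (p.1 ∈ S ∩ g ⁻¹' {v}) inst p.2 0) =
          if g p.1 = v then v * p.2 else 0 := by
        intro v inst
        by_cases h : g p.1 = v
        · have hm : p.1 ∈ S ∩ g ⁻¹' {v} := ⟨hp, h⟩
          rw [if_pos hm, if_pos h]
        · have hm : p.1 ∉ S ∩ g ⁻¹' {v} := fun hm => h hm.2
          rw [if_neg hm, if_neg h]
          ring
      simp only [e]
      rw [Finset.sum_ite_eq V (g p.1) (fun v => v * p.2)]
      simp [hp, hV p List.mem_cons_self]
    · have e : ∀ (v : ℝ) (inst : Decidable (p.1 ∈ S ∩ g ⁻¹' {v})),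
          v * (@ite ℝ (p.1 ∈ S ∩ g ⁻¹' {v}) inst p.2 0) = 0 := by
        intro v inst
        have hm : p.1 ∉ S ∩ g ⁻¹' {v} := fun hm => hp hm.1
        rw [if_neg hm]
        ring
      simp only [e]
      simp [hp]

end Aux

section Construction

variable {Ω : Type*}

/-- Split a weighted point `(x, w)` into the two points `g1 n x`, `g2 n x`
with respective weights `t n x * w` and `(1 - t n x) * w`. -/
def splitPair (g1 g2 : ℕ → Ω → Ω) (t : ℕ → Ω → ℝ) (n : ℕ) (p : Ω × ℝ) :
    List (Ω × ℝ) :=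
  [(g1 n p.1, t n p.1 * p.2), (g2 n p.1, (1 - t n p.1) * p.2)]

/-- The supporting weighted points at level `n`. -/
def mfmSupp (g1 g2 : ℕ → Ω → Ω) (t : ℕ → Ω → ℝ) (ω₀ : Ω) : ℕ → List (Ω × ℝ)
  | 0 => [(ω₀, 1)]
  | n + 1 => (mfmSupp g1 g2 t ω₀ n).flatMap (splitPair g1 g2 t n)

end Construction

theorem measure_free_martingale_measures_exist {Ω : Type*} [Nonempty Ω]
    (f : ℕ → Ω → ℝ) (hfin : ∀ n, (Set.range (f n)).Finite)
    (hmfm : IsMeasureFreeMartingale f) :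
    ∃ P : ℕ → Set Ω → ℝ,
      (∀ n, IsFAProb (algLevel f n) (P n)) ∧
      (∀ n, ∀ A ∈ algLevel f n, P (n + 1) A = P n A) ∧
      (∀ n (ω : Ω), ∑ v ∈ (hfin (n + 1)).toFinset,
        v * P (n + 1) (atomOf f n ω ∩ f (n + 1) ⁻¹' {v}) =
          f n ω * P (n + 1) (atomOf f n ω)) := by
  classical
  obtain ⟨ω₀⟩ := ‹Nonempty Ω›
  choose g1 hg1 hg1' using fun n ω => (hmfm n ω).1
  choose g2 hg2 hg2' using fun n ω => (hmfm n ω).2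
  set t : ℕ → Ω → ℝ := fun n x =>
    if f (n + 1) (g1 n x) = f (n + 1) (g2 n x) then 1
    else (f (n + 1) (g2 n x) - f n x) / (f (n + 1) (g2 n x) - f (n + 1) (g1 n x))
    with ht_def
  have ht0 : ∀ n x, 0 ≤ t n x := by
    intro n x
    simp only [ht_def]
    split
    · norm_num
    · have hab : f (n + 1) (g1 n x) < f (n + 1) (g2 n x) :=
        lt_of_le_of_ne ((hg1' n x).trans (hg2' n x)) (by assumption)
      exact div_nonneg (by linarith [hg2' n x]) (by linarith)
  have ht1 : ∀ n x, t n x ≤ 1 := by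
    intro n x
    simp only [ht_def]
    split
    · norm_num
    · have hab : f (n + 1) (g1 n x) < f (n + 1) (g2 n x) :=
        lt_of_le_of_ne ((hg1' n x).trans (hg2' n x)) (by assumption)
      rw [div_le_one (by linarith)]
      linarith [hg1' n x]
  have htval : ∀ n x,
      t n x * f (n + 1) (g1 n x) + (1 - t n x) * f (n + 1) (g2 n x) = f n x := by
    intro n x
    simp only [ht_def]
    split
    · rename_i h
      have h1 : f (n + 1) (g1 n x) = f n x :=
        le_antisymm (hg1' n x) (by rw [h]; exact hg2' n x)
      rw [h1] at h ⊢
      linarith [h.symm]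
    · rename_i h
      have hab : f (n + 1) (g1 n x) < f (n + 1) (g2 n x) :=
        lt_of_le_of_ne ((hg1' n x).trans (hg2' n x)) h
      have hne : f (n + 1) (g2 n x) - f (n + 1) (g1 n x) ≠ 0 := by linarith
      field_simp
      ring
  set L : ℕ → List (Ω × ℝ) := mfmSupp g1 g2 t ω₀ with hL_def
  have hLsucc : ∀ n, L (n + 1) = (L n).flatMap (splitPair g1 g2 t n) := fun n => rfl
  -- all weights are nonnegative
  have hw : ∀ n, ∀ p ∈ L n, 0 ≤ p.2 := by
    intro n
    induction n with
    | zero =>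
      intro p hp
      simp only [hL_def, mfmSupp, List.mem_singleton] at hp
      rw [hp]
      norm_num
    | succ n ih =>
      intro p hp
      rw [hLsucc, List.mem_flatMap] at hp
      obtain ⟨q, hq, hpq⟩ := hp
      have hq2 := ih q hq
      simp only [splitPair, List.mem_cons, List.mem_singleton, List.not_mem_nil,
        or_false] at hpq
      rcases hpq with h | h
      · rw [h]
        exact mul_nonneg (ht0 n q.1) hq2
      · rw [h]
        exact mul_nonneg (by linarith [ht1 n q.1]) hq2
  -- measure of a split pair on a level-n set
  have hsplit : ∀ n, ∀ A ∈ algLevel f n, ∀ p : Ω × ℝ,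
      mfmMeas (splitPair g1 g2 t n p) A = (if p.1 ∈ A then p.2 else 0) := by
    intro n A hA p
    have e1 : (g1 n p.1 ∈ A) ↔ (p.1 ∈ A) := mem_iff_of_algLevel hA (hg1 n p.1)
    have e2 : (g2 n p.1 ∈ A) ↔ (p.1 ∈ A) := mem_iff_of_algLevel hA (hg2 n p.1)
    simp only [splitPair, mfmMeas_cons, mfmMeas_nil]
    by_cases hp : p.1 ∈ A
    · rw [if_pos (e1.mpr hp), if_pos (e2.mpr hp), if_pos hp]
      ring
    · rw [if_neg (fun h => hp (e1.mp h)), if_neg (fun h => hp (e2.mp h)), if_neg hp]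
      ring
  -- consistency
  have hconsist : ∀ n, ∀ A ∈ algLevel f n, mfmMeas (L (n + 1)) A = mfmMeas (L n) A := by
    intro n A hA
    rw [hLsucc, mfmMeas_flatMap]
    have : ((L n).map fun p => mfmMeas (splitPair g1 g2 t n p) A) =
        ((L n).map fun p => if p.1 ∈ A then p.2 else 0) :=
      List.map_congr_left fun p _ => hsplit n A hA p
    rw [this]
    rfl
  have huniv_mem : ∀ n, (Set.univ : Set Ω) ∈ algLevel f n :=
    fun n ω _ => fun y _ => Set.mem_univ y
  have huniv : ∀ n, mfmMeas (L n) Set.univ = 1 := by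
    intro n
    induction n with
    | zero => simp [hL_def, mfmSupp, mfmMeas]
    | succ n ih => rw [hconsist n Set.univ (huniv_mem n), ih]
  refine ⟨fun n => mfmMeas (L n), fun n => ⟨fun A _ => mfmMeas_nonneg (hw n) A,
    mfmMeas_empty _, huniv n, fun A _ B _ hAB => mfmMeas_union hAB⟩,
    fun n A hA => hconsist n A hA, ?_⟩
  intro n ω
  set S := atomOf f n ω with hS_def
  have hS : S ∈ algLevel f n := atomOf_mem_algLevel f n ω
  have hV : ∀ p ∈ L (n + 1), f (n + 1) p.1 ∈ (hfin (n + 1)).toFinset :=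
    fun p _ => (hfin (n + 1)).mem_toFinset.mpr ⟨p.1, rfl⟩
  rw [sum_val_mfmMeas (L (n + 1)) _ (f (n + 1)) hV S]
  have hbeta : (fun n => mfmMeas (L n)) (n + 1) S = mfmMeas (L (n + 1)) S := rfl
  rw [hbeta, hconsist n S hS, mul_mfmMeas, hLsucc, sum_map_flatMap]
  apply congrArg List.sum
  apply List.map_congr_left
  intro p _
  -- per-pair computation
  have e1 : (g1 n p.1 ∈ S) ↔ (p.1 ∈ S) := mem_iff_of_algLevel hS (hg1 n p.1)
  have e2 : (g2 n p.1 ∈ S) ↔ (p.1 ∈ S) := mem_iff_of_algLevel hS (hg2 n p.1)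
  simp only [splitPair, List.map_cons, List.map_nil, List.sum_cons, List.sum_nil,
    add_zero]
  by_cases hp : p.1 ∈ S
  · rw [if_pos (e1.mpr hp), if_pos (e2.mpr hp), if_pos hp]
    have hfn : f n p.1 = f n ω := hp n (le_refl n)
    have := htval n p.1
    rw [hfn] at this
    linear_combination p.2 * this
  · rw [if_neg (fun h => hp (e1.mp h)), if_neg (fun h => hp (e2.mp h)), if_neg hp]
    ring
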